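/- For two agents with arbitrary utility functions over a finite set of indivisible items (normalized so that the empty bundle has utility zero), there always exists a complete allocation of the items that satisfies envy-freeness up to one item (EF1). -/

import Mathlib

open Finset

/-- The bundle of agent `i` under the assignment `f` of items to agents;
an assignment `f : Fin m → Fin n` encodes a complete allocation. -/
def bundle {n m : ℕ} (f : Fin m → Fin n) (i : Fin n) : Finset (Fin m) :=
  Finset.univ.filter fun o => f o = i

namespace EF1aux

/-- Prefix bundle: items with index `< k`. -/
def Lb (m k : ℕ) : Finset (Fin m) := Finset.univ.filter (fun o => (o : ℕ) < k)

/-- Suffix bundle: items with index `≥ k`. -/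
def Rb (m k : ℕ) : Finset (Fin m) := Finset.univ.filter (fun o => ¬ (o : ℕ) < k)

/-- Agent `i` is EF1-satisfied holding `X` against `Y`. -/
def EF1pair {m : ℕ} (u : Fin 2 → Finset (Fin m) → ℝ) (i : Fin 2)
    (X Y : Finset (Fin m)) : Prop :=
  (∃ O' ⊆ Y, O'.card ≤ 1 ∧ u i X ≥ u i (Y \ O')) ∨
  (∃ O' ⊆ X, O'.card ≤ 1 ∧ u i (X \ O') ≥ u i Y)

lemma EF1pair_refl {m : ℕ} (u : Fin 2 → Finset (Fin m) → ℝ) (i : Fin 2)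
    (X : Finset (Fin m)) : EF1pair u i X X :=
  Or.inl ⟨∅, Finset.empty_subset _, by simp, by simp⟩

/-- Happy holding left at cut `k`. -/
def PL (m : ℕ) (u : Fin 2 → Finset (Fin m) → ℝ) (i : Fin 2) (k : ℕ) : Prop :=
  EF1pair u i (Lb m k) (Rb m k)

/-- Happy holding right at cut `k`. -/
def PR (m : ℕ) (u : Fin 2 → Finset (Fin m) → ℝ) (i : Fin 2) (k : ℕ) : Prop :=
  EF1pair u i (Rb m k) (Lb m k)

lemma Lb_succ_sdiff {m k : ℕ} (hk : k < m) :
    Lb m (k + 1) \ {(⟨k, hk⟩ : Fin m)} = Lb m k := by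
  ext o
  simp only [Lb, Finset.mem_sdiff, Finset.mem_filter, Finset.mem_univ, true_and,
    Finset.mem_singleton, Fin.ext_iff]
  omega

lemma Rb_sdiff {m k : ℕ} (hk : k < m) :
    Rb m k \ {(⟨k, hk⟩ : Fin m)} = Rb m (k + 1) := by
  ext o
  simp only [Rb, Finset.mem_sdiff, Finset.mem_filter, Finset.mem_univ, true_and,
    Finset.mem_singleton, Fin.ext_iff]
  omega

lemma Lb_zero (m : ℕ) : Lb m 0 = Rb m m := by
  ext o
  have := o.isLt
  simp only [Lb, Rb, Finset.mem_filter, Finset.mem_univ, true_and]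
  omega

lemma Rb_zero (m : ℕ) : Rb m 0 = Lb m m := by
  ext o
  have := o.isLt
  simp only [Lb, Rb, Finset.mem_filter, Finset.mem_univ, true_and]
  omega

/-- Key step: at every edge `k → k+1`, agent `i` is happy with the same side
at both endpoints. -/
lemma lemA {m : ℕ} (u : Fin 2 → Finset (Fin m) → ℝ) (i : Fin 2) {k : ℕ} (hk : k < m) :
    (PL m u i k ∧ PL m u i (k + 1)) ∨ (PR m u i k ∧ PR m u i (k + 1)) := by
  set e : Fin m := ⟨k, hk⟩ with he
  have hL : Lb m (k + 1) \ {e} = Lb m k := Lb_succ_sdiff hk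
  have hR : Rb m k \ {e} = Rb m (k + 1) := Rb_sdiff hk
  have heR : ({e} : Finset (Fin m)) ⊆ Rb m k := by
    simp [Finset.singleton_subset_iff, Rb, e]
  have heL : ({e} : Finset (Fin m)) ⊆ Lb m (k + 1) := by
    simp [Finset.singleton_subset_iff, Lb, e]
  rcases le_total (u i (Rb m (k + 1))) (u i (Lb m k)) with h | h
  · left
    constructor
    · exact Or.inl ⟨{e}, heR, by simp, by rw [hR]; exact h⟩
    · exact Or.inr ⟨{e}, heL, by simp, by rw [hL]; exact h⟩
  · right
    constructor
    · exact Or.inr ⟨{e}, heR, by simp, by rw [hR]; exact h⟩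
    · exact Or.inl ⟨{e}, heL, by simp, by rw [hL]; exact h⟩

lemma lemB {m : ℕ} (u : Fin 2 → Finset (Fin m) → ℝ) (i : Fin 2) :
    PL m u i 0 ↔ PR m u i m := by
  unfold PL PR
  rw [Lb_zero, Rb_zero]

lemma lemB' {m : ℕ} (u : Fin 2 → Finset (Fin m) → ℝ) (i : Fin 2) :
    PR m u i 0 ↔ PL m u i m := by
  unfold PL PR
  rw [Lb_zero, Rb_zero]

/-- Existence of a good cut. -/
lemma good_cut {m : ℕ} (u : Fin 2 → Finset (Fin m) → ℝ) :
    ∃ k, (PL m u 0 k ∧ PR m u 1 k) ∨ (PR m u 0 k ∧ PL m u 1 k) := by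
  rcases Nat.eq_zero_or_pos m with hm | hm
  · subst hm
    refine ⟨0, Or.inl ⟨?_, ?_⟩⟩
    · have : Lb 0 0 = Rb 0 0 := Subsingleton.elim _ _
      unfold PL; rw [this]; exact EF1pair_refl u 0 _
    · have : Rb 0 0 = Lb 0 0 := Subsingleton.elim _ _
      unfold PR; rw [this]; exact EF1pair_refl u 1 _
  · by_contra hbad
    have hbad' : ∀ k, ¬ ((PL m u 0 k ∧ PR m u 1 k) ∨ (PR m u 0 k ∧ PL m u 1 k)) :=
      not_exists.mp hbad
    have nonvac : ∀ k ≤ m, ∀ i : Fin 2, PL m u i k ∨ PR m u i k := by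
      intro k hk i
      rcases lt_or_eq_of_le hk with hlt | heq
      · rcases lemA u i hlt with h | h
        · exact Or.inl h.1
        · exact Or.inr h.1
      · rw [heq]
        have h1 : m - 1 < m := by omega
        have h2 : m - 1 + 1 = m := by omega
        rcases lemA u i h1 with h | h
        · rw [h2] at h; exact Or.inl h.2
        · rw [h2] at h; exact Or.inr h.2
    set Q : ℕ → Prop := fun k =>
      PL m u 0 k ∧ PL m u 1 k ∧ ¬ PR m u 0 k ∧ ¬ PR m u 1 k with hQdef
    set R : ℕ → Prop := fun k =>
      PR m u 0 k ∧ PR m u 1 k ∧ ¬ PL m u 0 k ∧ ¬ PL m u 1 k with hRdef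
    have QR : ∀ k ≤ m, Q k ∨ R k := by
      intro k hk
      have h1 := nonvac k hk 0
      have h2 := nonvac k hk 1
      have hb := hbad' k
      simp only [hQdef, hRdef]
      tauto
    have stepQ : ∀ k, k < m → Q k → Q (k + 1) := by
      intro k hk hq
      rcases lemA u 0 hk with h | h
      · have hPL1 : PL m u 0 (k + 1) := h.2
        rcases QR (k + 1) (by omega) with h' | h'
        · exact h'
        · exact absurd hPL1 h'.2.2.1
      · exact absurd h.1 hq.2.2.1
    have stepR : ∀ k, k < m → R k → R (k + 1) := by
      intro k hk hr
      rcases lemA u 0 hk with h | h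
      · exact absurd h.1 hr.2.2.1
      · have hPR1 : PR m u 0 (k + 1) := h.2
        rcases QR (k + 1) (by omega) with h' | h'
        · exact absurd hPR1 h'.2.2.1
        · exact h'
    have propQ : ∀ k, k ≤ m → Q 0 → Q k := by
      intro k
      induction k with
      | zero => intro _ h; exact h
      | succ n ih =>
        intro hk h
        exact stepQ n (by omega) (ih (by omega) h)
    have propR : ∀ k, k ≤ m → R 0 → R k := by
      intro k
      induction k with
      | zero => intro _ h; exact h
      | succ n ih =>
        intro hk h
        exact stepR n (by omega) (ih (by omega) h)
    rcases QR 0 (Nat.zero_le m) with h0 | h0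
    · have hm' := propQ m le_rfl h0
      exact hm'.2.2.1 ((lemB u 0).mp h0.1)
    · have hm' := propR m le_rfl h0
      exact hm'.2.2.1 ((lemB' u 0).mp h0.1)

lemma bundle_L0 {m : ℕ} (k : ℕ) :
    bundle (fun o : Fin m => if (o : ℕ) < k then (0 : Fin 2) else 1) 0 = Lb m k := by
  ext o
  simp only [bundle, Lb, Finset.mem_filter, Finset.mem_univ, true_and]
  by_cases h : (o : ℕ) < k <;> simp [h, Fin.ext_iff]

lemma bundle_L1 {m : ℕ} (k : ℕ) :
    bundle (fun o : Fin m => if (o : ℕ) < k then (0 : Fin 2) else 1) 1 = Rb m k := by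
  ext o
  simp only [bundle, Rb, Finset.mem_filter, Finset.mem_univ, true_and]
  by_cases h : (o : ℕ) < k <;> simp [h, Fin.ext_iff]

lemma bundle_R0 {m : ℕ} (k : ℕ) :
    bundle (fun o : Fin m => if (o : ℕ) < k then (1 : Fin 2) else 0) 0 = Rb m k := by
  ext o
  simp only [bundle, Rb, Finset.mem_filter, Finset.mem_univ, true_and]
  by_cases h : (o : ℕ) < k <;> simp [h, Fin.ext_iff]

lemma bundle_R1 {m : ℕ} (k : ℕ) :
    bundle (fun o : Fin m => if (o : ℕ) < k then (1 : Fin 2) else 0) 1 = Lb m k := by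
  ext o
  simp only [bundle, Lb, Finset.mem_filter, Finset.mem_univ, true_and]
  by_cases h : (o : ℕ) < k <;> simp [h, Fin.ext_iff]

lemma assemble {m : ℕ} (u : Fin 2 → Finset (Fin m) → ℝ) (f : Fin m → Fin 2)
    (h01 : EF1pair u 0 (bundle f 0) (bundle f 1))
    (h10 : EF1pair u 1 (bundle f 1) (bundle f 0)) :
    ∀ i j : Fin 2, EF1pair u i (bundle f i) (bundle f j) := by
  intro i j
  fin_cases i <;> fin_cases j
  · exact EF1pair_refl u 0 _
  · exact h01
  · exact h10
  · exact EF1pair_refl u 1 _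

end EF1aux

/-- For two agents with arbitrary utility functions over a finite set of
indivisible items (normalized so that the empty bundle has utility zero), there exists a
complete allocation satisfying EF1. -/
theorem ef1_exists_two_agents_general (m : ℕ)
    (u : Fin 2 → Finset (Fin m) → ℝ) (hu0 : ∀ i, u i ∅ = 0) :
    ∃ f : Fin m → Fin 2, ∀ i j : Fin 2,
      (∃ O' ⊆ bundle f j, O'.card ≤ 1 ∧ u i (bundle f i) ≥ u i (bundle f j \ O')) ∨
      (∃ O' ⊆ bundle f i, O'.card ≤ 1 ∧ u i (bundle f i \ O') ≥ u i (bundle f j)) := by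
  classical
  obtain ⟨k, hk⟩ := EF1aux.good_cut u
  rcases hk with ⟨h1, h2⟩ | ⟨h1, h2⟩
  · -- agent 0 (index 1 in our PL/PR convention? careful) --
    refine ⟨fun o => if (o : ℕ) < k then (0 : Fin 2) else 1, ?_⟩
    have hb0 := EF1aux.bundle_L0 (m := m) k
    have hb1 := EF1aux.bundle_L1 (m := m) k
    exact EF1aux.assemble u _ (by rw [hb0, hb1]; exact h1) (by rw [hb0, hb1]; exact h2)
  · refine ⟨fun o => if (o : ℕ) < k then (1 : Fin 2) else 0, ?_⟩
    have hb0 := EF1aux.bundle_R0 (m := m) k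
    have hb1 := EF1aux.bundle_R1 (m := m) k
    exact EF1aux.assemble u _ (by rw [hb0, hb1]; exact h1) (by rw [hb0, hb1]; exact h2)
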